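/- Let F(u) = ½∫_{(-1,1)} |u'|² dx − ∫_{(-1,1)} f u dx on H¹₀(−1,1), with f(x) = u₀(x) = 1 − |x|. Define u(t) = (1+t) u₀. Then for every t ≥ 0, the distribution u''(t) + f equals −2(1+t)δ₀ + u₀, its positive part is [u''(t)+f]₊ = u₀ ∈ L², and u satisfies u̇(t) = [u''(t) + f]₊ with u(0) = u₀, yet the energy identity E(u(t)) = E(u₀) − ∫₀ᵗ ‖u̇(s)‖²_{L²} ds + ∫₀ᵗ ⟨f, u̇(s)⟩ ds fails: indeed E(u(t)) = (1+t)² while the right-hand side equals 1 for all t ≥ 0. -/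

import Mathlib

open MeasureTheory

/-- The hat function `u₀(x) = 1 − |x|` on `(−1,1)`. -/
noncomputable def hatFun (x : ℝ) : ℝ := 1 - |x|

/-- The curve `u(t) = (1+t) u₀`. -/
noncomputable def hatFlow (t x : ℝ) : ℝ := (1 + t) * hatFun x

/-- Counter-example to uniqueness for the parabolic problem `u̇ = [u'' + f]₊`: with
`f = u₀ = 1 − |·|` and `u(t) = (1+t)u₀` one has, for every `t ≥ 0`:
(1) the distributional identity `u''(t) + f = −2(1+t)δ₀ + u₀` (tested against smooth `φ`
compactly supported in `(−1,1)`);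
(2) the Hahn decomposition of this measure is into the mutually singular parts
`2(1+t)δ₀` and `u₀·(vol|_{(−1,1)})`, so `[u''(t)+f]₊ = u₀ ∈ L²`;
(3) `u̇(t) = u₀ = [u''(t)+f]₊` and `u(0) = u₀`;
(4)–(5) `E(u(t)) = (1+t)²` and `E(u₀) = 1`;
(6) the right-hand side `E(u₀) − ∫₀ᵗ ‖u̇‖² + ∫₀ᵗ ⟨f,u̇⟩` equals `1`, while `(1+t)² ≠ 1` for
`t > 0`, so the energy identity fails. -/
lemma hatFun_continuous : Continuous hatFun := continuous_const.sub continuous_abs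

lemma hat_ibp (φ : ℝ → ℝ) (hφ : ContDiff ℝ 2 φ) (hsub : tsupport φ ⊆ Set.Ioo (-1 : ℝ) 1) :
    ∫ x in (-1:ℝ)..1, hatFun x * deriv (deriv φ) x = -2 * φ 0 := by
  have h2 : ContDiff ℝ ((1:WithTop ℕ∞)+1) φ := by rw [one_add_one_eq_two]; exact hφ
  rw [contDiff_succ_iff_deriv] at h2
  have hdφ : Differentiable ℝ φ := h2.1
  have h1 : ContDiff ℝ ((0:WithTop ℕ∞)+1) (deriv φ) := by rw [zero_add]; exact h2.2.2
  rw [contDiff_succ_iff_deriv] at h1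
  have hdφ' : Differentiable ℝ (deriv φ) := h1.1
  have hcφ'' : Continuous (deriv (deriv φ)) := h1.2.2.continuous
  have hφ1 : φ 1 = 0 := by
    apply image_eq_zero_of_notMem_tsupport
    intro h; exact absurd (hsub h).2 (lt_irrefl 1)
  have hφm1 : φ (-1) = 0 := by
    apply image_eq_zero_of_notMem_tsupport
    intro h; exact absurd (hsub h).1 (lt_irrefl (-1))
  have hint : ∀ a b : ℝ, IntervalIntegrable (fun x => hatFun x * deriv (deriv φ) x) volume a b :=
    fun a b => ((hatFun_continuous.mul hcφ'').intervalIntegrable a b)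
  have hsplit : (∫ x in (-1:ℝ)..1, hatFun x * deriv (deriv φ) x) =
      (∫ x in (-1:ℝ)..0, hatFun x * deriv (deriv φ) x) +
      (∫ x in (0:ℝ)..1, hatFun x * deriv (deriv φ) x) :=
    (intervalIntegral.integral_add_adjacent_intervals (hint _ _) (hint _ _)).symm
  -- right piece
  have hR : (∫ x in (0:ℝ)..1, hatFun x * deriv (deriv φ) x) = -(deriv φ 0) - φ 0 := by
    have heq : (∫ x in (0:ℝ)..1, hatFun x * deriv (deriv φ) x) =
        ∫ x in (0:ℝ)..1, (1 - x) * deriv (deriv φ) x := by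
      apply intervalIntegral.integral_congr
      intro x hx
      rw [Set.uIcc_of_le (by norm_num : (0:ℝ) ≤ 1)] at hx
      simp [hatFun, abs_of_nonneg hx.1]
    rw [heq, intervalIntegral.integral_mul_deriv_eq_deriv_mul
      (u := fun x => 1 - x) (u' := fun _ => -1) (v := deriv φ) (v' := deriv (deriv φ))
      (fun x _ => by simpa using ((hasDerivAt_id x).const_sub 1))
      (fun x _ => (hdφ' x).hasDerivAt)
      (intervalIntegrable_const) (hcφ''.intervalIntegrable 0 1)]
    have : (∫ x in (0:ℝ)..1, (-1) * deriv φ x) = -(φ 1 - φ 0) := by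
      rw [intervalIntegral.integral_const_mul]
      rw [intervalIntegral.integral_deriv_eq_sub (fun x _ => hdφ x)
        (hdφ'.continuous.intervalIntegrable 0 1)]
      ring
    rw [this, hφ1]; ring
  have hL : (∫ x in (-1:ℝ)..0, hatFun x * deriv (deriv φ) x) = deriv φ 0 - φ 0 := by
    have heq : (∫ x in (-1:ℝ)..0, hatFun x * deriv (deriv φ) x) =
        ∫ x in (-1:ℝ)..0, (1 + x) * deriv (deriv φ) x := by
      apply intervalIntegral.integral_congr
      intro x hx
      rw [Set.uIcc_of_le (by norm_num : (-1:ℝ) ≤ 0)] at hx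
      simp [hatFun, abs_of_nonpos hx.2]
    rw [heq, intervalIntegral.integral_mul_deriv_eq_deriv_mul
      (u := fun x => 1 + x) (u' := fun _ => 1) (v := deriv φ) (v' := deriv (deriv φ))
      (fun x _ => by simpa using ((hasDerivAt_id x).const_add 1))
      (fun x _ => (hdφ' x).hasDerivAt)
      (intervalIntegrable_const) (hcφ''.intervalIntegrable _ _)]
    have : (∫ x in (-1:ℝ)..0, (1:ℝ) * deriv φ x) = φ 0 - φ (-1) := by
      simp only [one_mul]
      exact intervalIntegral.integral_deriv_eq_sub (fun x _ => hdφ x)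
        (hdφ'.continuous.intervalIntegrable _ _)
    rw [this, hφm1]; ring
  rw [hsplit, hR, hL]; ring

lemma hatFun_hasDerivAt_neg {x : ℝ} (hx : x < 0) : HasDerivAt hatFun 1 x := by
  have h : HasDerivAt (fun y : ℝ => 1 + y) 1 x := by simpa using (hasDerivAt_id x).const_add 1
  apply h.congr_of_eventuallyEq
  filter_upwards [Iio_mem_nhds hx] with y hy
  simp [hatFun, abs_of_neg (Set.mem_Iio.mp hy)]

lemma hatFun_hasDerivAt_pos {x : ℝ} (hx : 0 < x) : HasDerivAt hatFun (-1) x := by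
  have h : HasDerivAt (fun y : ℝ => 1 - y) (-1) x := by simpa using ((hasDerivAt_id x).const_sub 1)
  apply h.congr_of_eventuallyEq
  filter_upwards [Ioi_mem_nhds hx] with y hy
  simp [hatFun, abs_of_pos (Set.mem_Ioi.mp hy)]

lemma deriv_hatFlow_sq {t x : ℝ} (hx : x ≠ 0) :
    (deriv (fun y => hatFlow t y) x) ^ 2 = (1 + t) ^ 2 := by
  rcases hx.lt_or_gt with h | h
  · have : HasDerivAt (fun y => hatFlow t y) ((1 + t) * 1) x :=
      (hatFun_hasDerivAt_neg h).const_mul (1 + t)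
    rw [this.deriv]; ring
  · have : HasDerivAt (fun y => hatFlow t y) ((1 + t) * (-1)) x :=
      (hatFun_hasDerivAt_pos h).const_mul (1 + t)
    rw [this.deriv]; ring

lemma hat_energy (t : ℝ) :
    (1 / 2) * ∫ x in (-1:ℝ)..1, (deriv (fun y => hatFlow t y) x) ^ 2 = (1 + t) ^ 2 := by
  have h0 : ∀ᵐ x : ℝ, x ∉ ({0} : Set ℝ) :=
    measure_eq_zero_iff_ae_notMem.mp (by simp)
  have : (∫ x in (-1:ℝ)..1, (deriv (fun y => hatFlow t y) x) ^ 2) =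
      ∫ _x in (-1:ℝ)..1, ((1 + t) ^ 2 : ℝ) := by
    apply intervalIntegral.integral_congr_ae
    filter_upwards [h0] with x hx _
    exact deriv_hatFlow_sq (by simpa using hx)
  rw [this]
  simp
  ring

theorem hatFlow_solves_pde_but_violates_energy_identity :
    (∀ t : ℝ, 0 ≤ t → ∀ φ : ℝ → ℝ, ContDiff ℝ 2 φ → HasCompactSupport φ →
      tsupport φ ⊆ Set.Ioo (-1 : ℝ) 1 →
      (∫ x in (-1:ℝ)..1, hatFlow t x * deriv (deriv φ) x) +
          (∫ x in (-1:ℝ)..1, hatFun x * φ x) =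
        -2 * (1 + t) * φ 0 + ∫ x in (-1:ℝ)..1, hatFun x * φ x) ∧
    (∀ t : ℝ, 0 ≤ t →
      ((ENNReal.ofReal (2 * (1 + t))) • Measure.dirac (0 : ℝ)).MutuallySingular
        ((volume.restrict (Set.Ioo (-1:ℝ) 1)).withDensity
          fun x => ENNReal.ofReal (hatFun x))) ∧
    (∀ t x : ℝ, HasDerivAt (fun s => hatFlow s x) (hatFun x) t) ∧
    (hatFlow 0 = hatFun) ∧
    (∀ t : ℝ, 0 ≤ t →
      (1 / 2) * ∫ x in (-1:ℝ)..1, (deriv (fun y => hatFlow t y) x) ^ 2 = (1 + t) ^ 2) ∧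
    ((1 / 2) * ∫ x in (-1:ℝ)..1, (deriv hatFun x) ^ 2 = 1) ∧
    (∀ t : ℝ, 0 ≤ t →
      (1 : ℝ) - (∫ s in (0:ℝ)..t, ∫ x in (-1:ℝ)..1, (hatFun x) ^ 2) +
          (∫ s in (0:ℝ)..t, ∫ x in (-1:ℝ)..1, hatFun x * hatFun x) = 1) ∧
    (∀ t : ℝ, 0 < t → ((1 + t) ^ 2 : ℝ) ≠ 1) := by
  refine ⟨?_, ?_, ?_, ?_, ?_, ?_, ?_, ?_⟩
  · intro t _ φ hφ _ hsub
    have h1 : (∫ x in (-1:ℝ)..1, hatFlow t x * deriv (deriv φ) x) =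
        (1 + t) * ∫ x in (-1:ℝ)..1, hatFun x * deriv (deriv φ) x := by
      rw [← intervalIntegral.integral_const_mul]
      apply intervalIntegral.integral_congr
      intro x _
      simp [hatFlow, mul_assoc]
    rw [h1, hat_ibp φ hφ hsub]
    ring
  · intro t _
    refine ⟨{0}ᶜ, (measurableSet_singleton 0).compl, by simp, ?_⟩
    rw [compl_compl, withDensity_apply _ (measurableSet_singleton 0)]
    apply setLIntegral_measure_zero
    rw [Measure.restrict_apply (measurableSet_singleton 0)]
    exact measure_mono_null Set.inter_subset_left (by simp)
  · intro t x
    simpa [hatFlow] using ((hasDerivAt_id t).const_add 1).mul_const (hatFun x)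
  · funext x; simp [hatFlow]
  · intro t _; exact hat_energy t
  · have h := hat_energy 0
    rw [show (fun y => hatFlow 0 y) = hatFun from funext fun x => by simp [hatFlow]] at h
    simpa using h
  · intro t _
    simp only [← sq]
    ring
  · intro t ht
    nlinarith
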